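/- arXiv:2508.04666 — 2 statements merged into one kernel-verified Lean document; each statement's English description precedes it below -/
import Mathlib

section
/- Let λ be a partition, n ≥ 1, and j an index with λ_j = λ_{j+1}. For every σ ∈ Tab(λ,n), maj(τ_j(σ)) = maj(σ). -/
open scoped Classical

noncomputable section

namespace MacQuinv

/-- Height of column `j` (0-indexed) of the diagram of `lam`. -/
def colHt (lam : List ℕ) (j : ℕ) : ℕ := lam.getD j 0

/-- The diagram `dg(λ)`: cells `(r, j)` with `1 ≤ r ≤ λ_j` (row `r` counted from the bottom)
and `j` a (0-indexed) column index. -/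
def dg (lam : List ℕ) : Finset (ℕ × ℕ) :=
  (Finset.Icc 1 (lam.foldr max 0) ×ˢ Finset.range lam.length).filter
    fun u => u.1 ≤ colHt lam u.2

abbrev Cell (lam : List ℕ) := {u : ℕ × ℕ // u ∈ dg lam}

/-- A filling of `dg(λ)` with entries in `{1,…,n}` (encoded via `Fin n`: entry = value + 1).
`Tab(λ,n)` is the set of all such fillings. -/
abbrev Filling (lam : List ℕ) (n : ℕ) := Cell lam → Fin n

/-- The entry of `σ` at a cell `u`, an element of `{1,…,n}` for `u ∈ dg(λ)`,
and `0` outside of the diagram. -/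
def ent {lam : List ℕ} {n : ℕ} (σ : Filling lam n) (u : ℕ × ℕ) : ℕ :=
  if h : u ∈ dg lam then (σ ⟨u, h⟩ : ℕ) + 1 else 0

/-- `leg(u)` = number of cells above `u` in its column. -/
def leg (lam : List ℕ) (u : ℕ × ℕ) : ℕ := colHt lam u.2 - u.1

/-- Descents: cells `u` in rows `r ≥ 2` with `σ(u) > σ(South(u))`. -/
def Des {lam : List ℕ} {n : ℕ} (σ : Filling lam n) : Finset (ℕ × ℕ) :=
  (dg lam).filter fun u => 2 ≤ u.1 ∧ ent σ (u.1 - 1, u.2) < ent σ u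

def maj {lam : List ℕ} {n : ℕ} (σ : Filling lam n) : ℕ :=
  ∑ u ∈ Des σ, (leg lam u + 1)

/-- The quinv-orientation condition on entries `a` (above `b`), `b`, `c` (same row as `b`,
to its right): counterclockwise when read in increasing order. -/
def QEnt (a b c : ℕ) : Prop :=
  (a ≤ b ∧ b < c) ∨ (b < c ∧ c < a) ∨ (c < a ∧ a ≤ b)

/-- L-triples of `dg(λ)`, encoded by their two bottom cells `(y, z)`: `y = (r,i)`, `z = (r,j)`
with `i < j`.  The top cell is the cell `(r+1, i)` above `y` when it is in the diagram
(non-degenerate case); when `λ_i = r` the triple is degenerate. -/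
def Ltriples (lam : List ℕ) : Finset ((ℕ × ℕ) × (ℕ × ℕ)) :=
  ((dg lam) ×ˢ (dg lam)).filter fun p => p.1.1 = p.2.1 ∧ p.1.2 < p.2.2

/-- Whether the L-triple with bottom cells `y, z` is a quinv triple of `σ`.  (In the
degenerate case the entry of the missing top cell is `0`, which makes the condition reduce
to `σ(y) < σ(z)`, as required.) -/
def QuinvTriple {lam : List ℕ} {n : ℕ} (σ : Filling lam n) (y z : ℕ × ℕ) : Prop :=
  QEnt (ent σ (y.1 + 1, y.2)) (ent σ y) (ent σ z)

def quinv {lam : List ℕ} {n : ℕ} (σ : Filling lam n) : ℕ :=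
  ((Ltriples lam).filter fun p => QuinvTriple σ p.1 p.2).card

/-- The content monomial `x^σ = ∏_{u ∈ dg(λ)} x_{σ(u)}`. -/
def xmon {lam : List ℕ} {n : ℕ} (R : Type) [CommSemiring R] (σ : Filling lam n) :
    MvPolynomial (Fin n) R :=
  ∏ u : Cell lam, MvPolynomial.X (σ u)


/-- The list of entries of column `j` of `σ`, from bottom (row 1) to top. -/
def columnOf {lam : List ℕ} {n : ℕ} (σ : Filling lam n) (j : ℕ) : List ℕ :=
  (List.range (colHt lam j)).map fun r => ent σ (r + 1, j)

/-- The topmost row at which columns `j` and `j'` of `σ` differ (for columns of equal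
height; `0` if the columns agree everywhere). -/
def topDiff {lam : List ℕ} {n : ℕ} (σ : Filling lam n) (j j' : ℕ) : ℕ :=
  sSup {r : ℕ | r ∈ Finset.Icc 1 (colHt lam j) ∧ ent σ (r, j) ≠ ent σ (r, j')}

/-- The order on (unequal, equal-height) columns: column `jA` is greater than column `jB`
if, at the topmost row `r` where they differ, the cells of `a_{r+1}, a_r, b_r` form a quinv
triple (`a` = entries of column `jA`, `b` = entries of column `jB`; when `r` is the top row,
the entry above is `0` by convention). -/
def ColGT {lam : List ℕ} {n : ℕ} (σ : Filling lam n) (jA jB : ℕ) : Prop :=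
  QEnt (ent σ (topDiff σ jA jB + 1, jA)) (ent σ (topDiff σ jA jB, jA))
    (ent σ (topDiff σ jA jB, jB))

/-- `σ` is quinv-sorted: for any two columns of equal height, the one on the left is not
greater than the one on the right; equivalently for positions `j < j'`, either the two
columns are equal or the column at `j'` is the greater one. -/
def QuinvSorted {lam : List ℕ} {n : ℕ} (σ : Filling lam n) : Prop :=
  ∀ j j' : ℕ, j < j' → j' < lam.length → colHt lam j = colHt lam j' →
    columnOf σ j = columnOf σ j' ∨ ColGT σ j' j

/-- The `t`-integer `[m]_t = 1 + t + ⋯ + t^{m-1}`, in `ℤ[q,t]` realized as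
`Polynomial (Polynomial ℤ)` with `t` the outer variable and `q` the inner one. -/
def tInt (m : ℕ) : Polynomial (Polynomial ℤ) :=
  ∑ i ∈ Finset.range m, Polynomial.X ^ i

/-- The `t`-factorial `[m]_t!`. -/
def tFact : ℕ → Polynomial (Polynomial ℤ)
  | 0 => 1
  | m + 1 => tInt (m + 1) * tFact m

/-- `perm(σ)`: the product over all heights `i` of the `t`-multinomial coefficient
`[m_1 + ⋯ + m_k choose m_1, …, m_k]_t`, where `m_1, …, m_k` are the multiplicities of the
distinct columns among the columns of `σ` of height `i`.  The `t`-multinomial (a polynomial)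
is realized as the exact division `[m_1+⋯+m_k]_t! / ([m_1]_t! ⋯ [m_k]_t!)`, computed with
`Polynomial.divByMonic` (the divisor is monic). -/
def permCoeff {lam : List ℕ} {n : ℕ} (σ : Filling lam n) : Polynomial (Polynomial ℤ) :=
  ∏ i ∈ Finset.Icc 1 (lam.foldr max 0),
    Polynomial.divByMonic
      (tFact ((Finset.range lam.length).filter fun j => colHt lam j = i).card)
      (∏ c ∈ ((Finset.range lam.length).filter fun j => colHt lam j = i).image
          (fun j => columnOf σ j),
        tFact ((Finset.range lam.length).filter
          fun j => colHt lam j = i ∧ columnOf σ j = c).card)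


/-- The cell obtained by reflecting a cell of columns `j`, `j+1` into the other column. -/
def mirror (j : ℕ) (u : ℕ × ℕ) : ℕ × ℕ :=
  if u.2 = j then (u.1, j + 1) else if u.2 = j + 1 then (u.1, j) else u

/-- Whether swapping the entries of row `i` between columns `j` and `j+1` changes the
quinv status of the L-triple on the cells `((i,j), (i-1,j), (i-1,j+1))`. -/
def SwapChanges {lam : List ℕ} {n : ℕ} (σ : Filling lam n) (j i : ℕ) : Prop :=
  ¬ (QEnt (ent σ (i, j)) (ent σ (i - 1, j)) (ent σ (i - 1, j + 1)) ↔
      QEnt (ent σ (i, j + 1)) (ent σ (i - 1, j)) (ent σ (i - 1, j + 1)))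

/-- `SwapDown σ j ℓ d` holds iff the iterative swapping of `τ_j`, started at row `ℓ`,
reaches row `ℓ - d`:  row `ℓ` is swapped, and row `i - 1` is swapped iff row `i` is swapped
and swapping row `i` changes the quinv status of the triple at rows `i, i-1`. -/
def SwapDown {lam : List ℕ} {n : ℕ} (σ : Filling lam n) (j ℓ : ℕ) : ℕ → Prop
  | 0 => True
  | d + 1 => SwapDown σ j ℓ d ∧ SwapChanges σ j (ℓ - d)

/-- Row `r` gets swapped by `τ_j`: columns `j`, `j+1` are not identical, `1 ≤ r ≤ ℓ`
(where `ℓ` is the topmost row where the two columns differ), and the iterative swapping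
propagates from row `ℓ` all the way down to row `r`. -/
def Swapped {lam : List ℕ} {n : ℕ} (σ : Filling lam n) (j : ℕ) (r : ℕ) : Prop :=
  columnOf σ j ≠ columnOf σ (j + 1) ∧ 1 ≤ r ∧ r ≤ topDiff σ j (j + 1) ∧
    SwapDown σ j (topDiff σ j (j + 1)) (topDiff σ j (j + 1) - r)

/-- The operator `τ_j` (for `λ_j = λ_{j+1}`): it exchanges, between columns `j` and `j+1`,
the entries of exactly the rows selected by `Swapped`, and leaves everything else unchanged. -/
def tauj {lam : List ℕ} {n : ℕ} (j : ℕ) (σ : Filling lam n) : Filling lam n :=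
  fun u =>
    if (u.1.2 = j ∨ u.1.2 = j + 1) ∧ Swapped σ j u.1.1 then
      if h : mirror j u.1 ∈ dg lam then σ ⟨mirror j u.1, h⟩ else σ u
    else σ u

/-- The multiset of entries of `σ` in row `r`. -/
def rowMultiset {lam : List ℕ} {n : ℕ} (σ : Filling lam n) (r : ℕ) : Multiset ℕ :=
  ((dg lam).filter fun u => u.1 = r).val.map (ent σ)


/-! ### Auxiliary lemmas for the proof -/

lemma le_foldr_max {l : List ℕ} {x : ℕ} (hx : x ∈ l) : x ≤ l.foldr max 0 := by
  induction l with
  | nil => simp at hx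
  | cons a t ih =>
    rcases List.mem_cons.mp hx with rfl | h
    · exact le_max_left _ _
    · exact le_trans (ih h) (le_max_right _ _)

lemma mem_dg {lam : List ℕ} {u : ℕ × ℕ} :
    u ∈ dg lam ↔ 1 ≤ u.1 ∧ u.2 < lam.length ∧ u.1 ≤ colHt lam u.2 := by
  unfold dg
  simp only [Finset.mem_filter, Finset.mem_product, Finset.mem_Icc, Finset.mem_range]
  constructor
  · rintro ⟨⟨⟨h1, _⟩, h3⟩, h4⟩; exact ⟨h1, h3, h4⟩
  · rintro ⟨h1, h3, h4⟩
    refine ⟨⟨⟨h1, ?_⟩, h3⟩, h4⟩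
    have hmem : colHt lam u.2 ∈ lam := by
      rw [colHt, List.getD_eq_getElem lam 0 h3]
      exact List.getElem_mem _
    exact h4.trans (le_foldr_max hmem)

lemma ent_tauj_other {lam : List ℕ} {n : ℕ} (j : ℕ) (σ : Filling lam n) {u : ℕ × ℕ}
    (h1 : u.2 ≠ j) (h2 : u.2 ≠ j + 1) : ent (tauj j σ) u = ent σ u := by
  unfold ent
  by_cases h : u ∈ dg lam
  · rw [dif_pos h, dif_pos h]
    unfold tauj
    rw [if_neg]
    rintro ⟨hc, -⟩
    rcases hc with hc | hc
    · exact h1 hc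
    · exact h2 hc
  · rw [dif_neg h, dif_neg h]

lemma topDiff_le {lam : List ℕ} {n : ℕ} (σ : Filling lam n) (j j' : ℕ) :
    topDiff σ j j' ≤ colHt lam j := by
  unfold topDiff
  by_cases hne : {r : ℕ | r ∈ Finset.Icc 1 (colHt lam j) ∧ ent σ (r, j) ≠ ent σ (r, j')}.Nonempty
  · exact csSup_le hne fun r hr => (Finset.mem_Icc.mp hr.1).2
  · rw [Set.not_nonempty_iff_eq_empty.mp hne, csSup_empty]
    exact bot_le

lemma ent_eq_of_gt_topDiff {lam : List ℕ} {n : ℕ} {j : ℕ}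
    (hcol : colHt lam j = colHt lam (j + 1)) (σ : Filling lam n) {r : ℕ}
    (hr : topDiff σ j (j + 1) < r) : ent σ (r, j) = ent σ (r, j + 1) := by
  by_cases hle : r ≤ colHt lam j
  · by_contra hne
    have hmem : r ∈ {s : ℕ | s ∈ Finset.Icc 1 (colHt lam j) ∧ ent σ (s, j) ≠ ent σ (s, j + 1)} :=
      ⟨Finset.mem_Icc.mpr ⟨by omega, hle⟩, hne⟩
    have hbdd : BddAbove {s : ℕ | s ∈ Finset.Icc 1 (colHt lam j) ∧
        ent σ (s, j) ≠ ent σ (s, j + 1)} :=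
      ⟨colHt lam j, fun x hx => (Finset.mem_Icc.mp hx.1).2⟩
    have hle2 : r ≤ topDiff σ j (j + 1) := le_csSup hbdd hmem
    omega
  · have h1 : (r, j) ∉ dg lam := by
      intro hm
      exact hle (mem_dg.mp hm).2.2
    have h2 : (r, j + 1) ∉ dg lam := by
      intro hm
      have := (mem_dg.mp hm).2.2
      rw [← hcol] at this
      exact hle this
    simp [ent, h1, h2]

lemma swapDown_mono {lam : List ℕ} {n : ℕ} {σ : Filling lam n} {j ℓ : ℕ} :
    ∀ {d : ℕ}, SwapDown σ j ℓ d → ∀ {d' : ℕ}, d' ≤ d → SwapDown σ j ℓ d' := by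
  intro d
  induction d with
  | zero =>
    intro _ d' hd'
    obtain rfl : d' = 0 := Nat.le_zero.mp hd'
    exact trivial
  | succ k ih =>
    intro hswap d' hd'
    rcases Nat.eq_or_lt_of_le hd' with rfl | hlt
    · exact hswap
    · have h' : SwapDown σ j ℓ k ∧ SwapChanges σ j (ℓ - k) := hswap
      exact ih h'.1 (by omega)

lemma swapped_up {lam : List ℕ} {n : ℕ} {σ : Filling lam n} {j r r' : ℕ}
    (h : Swapped σ j r) (h1 : r ≤ r') (h2 : r' ≤ topDiff σ j (j + 1)) :
    Swapped σ j r' :=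
  ⟨h.1, le_trans h.2.1 h1, h2, swapDown_mono h.2.2.2 (by omega)⟩

lemma not_swapChanges_of {lam : List ℕ} {n : ℕ} {σ : Filling lam n} {j r : ℕ}
    (hs : Swapped σ j r) (hr : 2 ≤ r) (hns : ¬ Swapped σ j (r - 1)) :
    ¬ SwapChanges σ j r := by
  intro hc
  apply hns
  have hrl := hs.2.2.1
  refine ⟨hs.1, by omega, by omega, ?_⟩
  have e1 : topDiff σ j (j + 1) - (r - 1) = (topDiff σ j (j + 1) - r) + 1 := by omega
  rw [e1]
  have e2 : topDiff σ j (j + 1) - (topDiff σ j (j + 1) - r) = r := by omega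
  exact ⟨hs.2.2.2, by rw [e2]; exact hc⟩

lemma ent_tauj_swap {lam : List ℕ} {n : ℕ} {j : ℕ} (hj : j + 1 < lam.length)
    (hcol : colHt lam j = colHt lam (j + 1)) (σ : Filling lam n) (r : ℕ) {c c' : ℕ}
    (hc : (c = j ∧ c' = j + 1) ∨ (c = j + 1 ∧ c' = j)) :
    ent (tauj j σ) (r, c) = if Swapped σ j r then ent σ (r, c') else ent σ (r, c) := by
  by_cases hs : Swapped σ j r
  · rw [if_pos hs]
    have h1 := hs.2.1
    have h2 := hs.2.2.1
    have h3 := topDiff_le σ j (j + 1)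
    have hin : (r, c) ∈ dg lam := by
      rw [mem_dg]
      refine ⟨h1, show c < lam.length from ?_, show r ≤ colHt lam c from ?_⟩
      · rcases hc with ⟨rfl, -⟩ | ⟨rfl, -⟩ <;> omega
      · rcases hc with ⟨rfl, -⟩ | ⟨rfl, -⟩
        · omega
        · rw [← hcol]; omega
    have hin' : (r, c') ∈ dg lam := by
      rw [mem_dg]
      refine ⟨h1, show c' < lam.length from ?_, show r ≤ colHt lam c' from ?_⟩
      · rcases hc with ⟨-, rfl⟩ | ⟨-, rfl⟩ <;> omega
      · rcases hc with ⟨-, rfl⟩ | ⟨-, rfl⟩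
        · rw [← hcol]; omega
        · omega
    have hm : mirror j (r, c) = (r, c') := by
      rcases hc with ⟨rfl, rfl⟩ | ⟨rfl, rfl⟩ <;> simp [mirror]
    unfold ent
    rw [dif_pos hin, dif_pos hin']
    unfold tauj
    rw [if_pos]
    · simp only [hm]
      rw [dif_pos hin']
    · constructor
      · rcases hc with ⟨rfl, -⟩ | ⟨rfl, -⟩
        · exact Or.inl rfl
        · exact Or.inr rfl
      · exact hs
  · rw [if_neg hs]
    by_cases hin : (r, c) ∈ dg lam
    · unfold ent
      rw [dif_pos hin, dif_pos hin]
      unfold tauj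
      rw [if_neg]
      rintro ⟨-, hsw⟩
      exact hs hsw
    · unfold ent
      rw [dif_neg hin, dif_neg hin]

lemma qent_swap_count (w a a' b c : ℕ) (h : QEnt a b c ↔ QEnt a' b c) :
    (if b < a' then w else 0) + (if c < a then w else 0)
      = (if b < a then w else 0) + (if c < a' then w else 0) := by
  unfold QEnt at h
  split_ifs <;> omega

/-- for `λ_j = λ_{j+1}`, the operator `τ_j` preserves the major index. -/
theorem tauj_preserves_maj
    (lam : List ℕ) (hdec : lam.Pairwise (· ≥ ·)) (hpos : ∀ m ∈ lam, 0 < m)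
    (n : ℕ) (hn : 1 ≤ n) (j : ℕ) (hj : j + 1 < lam.length)
    (hcol : colHt lam j = colHt lam (j + 1)) (σ : Filling lam n) :
    maj (tauj j σ) = maj σ := by
  classical
  have hmaj : ∀ τ : Filling lam n, maj τ = ∑ u ∈ dg lam,
      (if 2 ≤ u.1 ∧ ent τ (u.1 - 1, u.2) < ent τ u then leg lam u + 1 else 0) := by
    intro τ
    unfold maj Des
    rw [Finset.sum_filter]
  rw [hmaj, hmaj]
  have split : ∀ f : ℕ × ℕ → ℕ, ∑ u ∈ dg lam, f u =
      ∑ u ∈ (dg lam).filter (fun u => u.2 = j ∨ u.2 = j + 1), f u +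
      ∑ u ∈ (dg lam).filter (fun u => ¬(u.2 = j ∨ u.2 = j + 1)), f u :=
    fun f => (Finset.sum_filter_add_sum_filter_not _ _ f).symm
  rw [split, split]
  have hB : ∑ u ∈ (dg lam).filter (fun u => ¬(u.2 = j ∨ u.2 = j + 1)),
      (if 2 ≤ u.1 ∧ ent (tauj j σ) (u.1 - 1, u.2) < ent (tauj j σ) u
        then leg lam u + 1 else 0)
      = ∑ u ∈ (dg lam).filter (fun u => ¬(u.2 = j ∨ u.2 = j + 1)),
      (if 2 ≤ u.1 ∧ ent σ (u.1 - 1, u.2) < ent σ u then leg lam u + 1 else 0) := by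
    refine Finset.sum_congr rfl fun u hu => ?_
    have hne := (Finset.mem_filter.mp hu).2
    push_neg at hne
    have ha : ent (tauj j σ) u = ent σ u := ent_tauj_other j σ hne.1 hne.2
    have hb : ent (tauj j σ) (u.1 - 1, u.2) = ent σ (u.1 - 1, u.2) :=
      ent_tauj_other j σ hne.1 hne.2
    rw [ha, hb]
  rw [hB]
  congr 1
  have hset : (dg lam).filter (fun u => u.2 = j ∨ u.2 = j + 1)
      = Finset.Icc 1 (colHt lam j) ×ˢ ({j, j + 1} : Finset ℕ) := by
    ext ⟨r, c⟩
    simp only [Finset.mem_filter, mem_dg, Finset.mem_product, Finset.mem_Icc,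
      Finset.mem_insert, Finset.mem_singleton]
    constructor
    · rintro ⟨⟨h1, h2, h3⟩, hc⟩
      refine ⟨⟨h1, ?_⟩, hc⟩
      rcases hc with rfl | rfl
      · exact h3
      · rw [hcol]; exact h3
    · rintro ⟨⟨h1, h2⟩, hc⟩
      refine ⟨⟨h1, ?_, ?_⟩, hc⟩
      · rcases hc with rfl | rfl
        · omega
        · exact hj
      · rcases hc with rfl | rfl
        · exact h2
        · rw [← hcol]; exact h2
  rw [hset, Finset.sum_product, Finset.sum_product]
  refine Finset.sum_congr rfl fun r hr => ?_
  rw [Finset.sum_pair (show j ≠ j + 1 by omega), Finset.sum_pair (show j ≠ j + 1 by omega)]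
  have hr1 : 1 ≤ r := (Finset.mem_Icc.mp hr).1
  rcases Nat.lt_or_ge r 2 with hr2 | hr2
  · obtain rfl : r = 1 := by omega
    simp
  · have e1 : ent (tauj j σ) (r, j)
        = if Swapped σ j r then ent σ (r, j + 1) else ent σ (r, j) :=
      ent_tauj_swap hj hcol σ r (Or.inl ⟨rfl, rfl⟩)
    have e2 : ent (tauj j σ) (r, j + 1)
        = if Swapped σ j r then ent σ (r, j) else ent σ (r, j + 1) :=
      ent_tauj_swap hj hcol σ r (Or.inr ⟨rfl, rfl⟩)
    have e3 : ent (tauj j σ) (r - 1, j)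
        = if Swapped σ j (r - 1) then ent σ (r - 1, j + 1) else ent σ (r - 1, j) :=
      ent_tauj_swap hj hcol σ (r - 1) (Or.inl ⟨rfl, rfl⟩)
    have e4 : ent (tauj j σ) (r - 1, j + 1)
        = if Swapped σ j (r - 1) then ent σ (r - 1, j) else ent σ (r - 1, j + 1) :=
      ent_tauj_swap hj hcol σ (r - 1) (Or.inr ⟨rfl, rfl⟩)
    have hleg : leg lam (r, j + 1) = leg lam (r, j) := by
      unfold leg
      show colHt lam (j + 1) - r = colHt lam j - r
      rw [hcol]
    show (if 2 ≤ r ∧ ent (tauj j σ) (r - 1, j) < ent (tauj j σ) (r, j)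
            then leg lam (r, j) + 1 else 0)
        + (if 2 ≤ r ∧ ent (tauj j σ) (r - 1, j + 1) < ent (tauj j σ) (r, j + 1)
            then leg lam (r, j + 1) + 1 else 0)
      = (if 2 ≤ r ∧ ent σ (r - 1, j) < ent σ (r, j) then leg lam (r, j) + 1 else 0)
        + (if 2 ≤ r ∧ ent σ (r - 1, j + 1) < ent σ (r, j + 1)
            then leg lam (r, j + 1) + 1 else 0)
    rw [e1, e2, e3, e4, hleg]
    by_cases hp1 : Swapped σ j r <;> by_cases hp0 : Swapped σ j (r - 1)
    · simp only [hp1, hp0, if_true]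
      exact add_comm _ _
    · simp only [hp1, hp0, if_true, if_neg hp0]
      have hnc : ¬ SwapChanges σ j r := not_swapChanges_of hp1 hr2 hp0
      unfold SwapChanges at hnc
      have hkey := not_not.mp hnc
      simp only [hr2, true_and]
      exact qent_swap_count _ _ _ _ _ hkey
    · simp only [if_neg hp1, hp0, if_true]
      have hgt : topDiff σ j (j + 1) < r := by
        by_contra hle
        push_neg at hle
        exact hp1 (swapped_up hp0 (by omega) hle)
      have heq : ent σ (r, j) = ent σ (r, j + 1) := ent_eq_of_gt_topDiff hcol σ hgt
      rw [heq]
      exact add_comm _ _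
    · simp only [if_neg hp1, if_neg hp0]

end MacQuinv
end
end

section
/- Let λ be a partition, n ≥ 1, and j an index with λ_j = λ_{j+1}. For every σ ∈ Tab(λ,n) whose columns j and j+1 are not identical, quinv(τ_j(σ)) = quinv(σ) + 1 or quinv(τ_j(σ)) = quinv(σ) − 1 (i.e., |quinv(τ_j(σ)) − quinv(σ)| = 1). -/
open scoped Classical

noncomputable section

namespace MacQuinv

/-! ### Auxiliary lemmas for Statement 4 -/

lemma qent_not_self (a b : ℕ) : ¬ QEnt a b b := by simp only [QEnt]; omega

lemma qent_swap {a b c : ℕ} (h : b ≠ c) : QEnt a b c ↔ ¬ QEnt a c b := by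
  simp only [QEnt]; omega

lemma qent_count {a a' b b' c : ℕ} (H : QEnt a b b' ↔ QEnt a' b b') :
    ((if QEnt a' b c then (1:ℤ) else 0) - (if QEnt a b c then 1 else 0)) +
      ((if QEnt a b' c then (1:ℤ) else 0) - (if QEnt a' b' c then 1 else 0)) = 0 := by
  simp only [QEnt] at H ⊢
  split_ifs <;> omega

lemma ite_sub_eq_zero {P R : Prop} (h : P ↔ R) :
    (if P then (1:ℤ) else 0) - (if R then 1 else 0) = 0 := by
  simp only [h]; ring

lemma ite_flip {P R : Prop} (h : P ↔ ¬ R) :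
    ((if P then (1:ℤ) else 0) - (if R then 1 else 0) = 1) ∨
      ((if P then (1:ℤ) else 0) - (if R then 1 else 0) = -1) := by
  by_cases hR : R <;> simp [h, hR]

lemma colHt_le_foldr (l : List ℕ) (k : ℕ) : colHt l k ≤ l.foldr max 0 := by
  unfold colHt
  induction l generalizing k with
  | nil => simp
  | cons a t ih =>
    cases k with
    | zero => simp [List.getD_cons_zero]
    | succ k =>
      simp only [List.getD_cons_succ, List.foldr_cons]
      exact le_trans (ih k) (le_max_right _ _)

lemma ent_out {lam : List ℕ} {n : ℕ} {σ : Filling lam n} {u : ℕ × ℕ} (h : u ∉ dg lam) :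
    ent σ u = 0 := dif_neg h

lemma mirror_left (j r : ℕ) : mirror j (r, j) = (r, j + 1) := by simp [mirror]

lemma mirror_right (j r : ℕ) : mirror j (r, j + 1) = (r, j) := by
  unfold mirror
  rw [if_neg (by simp), if_pos rfl]

lemma mirror_other {j i : ℕ} (r : ℕ) (h1 : i ≠ j) (h2 : i ≠ j + 1) :
    mirror j (r, i) = (r, i) := by
  unfold mirror
  rw [if_neg (by simpa using h1), if_neg (by simpa using h2)]

lemma mirror_mirror (j : ℕ) (u : ℕ × ℕ) : mirror j (mirror j u) = u := by
  rcases u with ⟨r, i⟩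
  by_cases h1 : i = j
  · subst h1; rw [mirror_left, mirror_right]
  · by_cases h2 : i = j + 1
    · subst h2; rw [mirror_right, mirror_left]
    · rw [mirror_other r h1 h2, mirror_other r h1 h2]

lemma mirror_mem {lam : List ℕ} {j : ℕ} (hj : j + 1 < lam.length)
    (hcol : colHt lam j = colHt lam (j + 1)) (u : ℕ × ℕ) :
    mirror j u ∈ dg lam ↔ u ∈ dg lam := by
  rcases u with ⟨r, i⟩
  by_cases h1 : i = j
  · subst h1
    rw [mirror_left, mem_dg, mem_dg]
    simp only
    rw [← hcol]
    constructor
    · rintro ⟨a, b, c⟩; exact ⟨a, by omega, c⟩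
    · rintro ⟨a, b, c⟩; exact ⟨a, by omega, c⟩
  · by_cases h2 : i = j + 1
    · subst h2
      rw [mirror_right, mem_dg, mem_dg]
      simp only
      rw [hcol]
      constructor
      · rintro ⟨a, b, c⟩; exact ⟨a, by omega, c⟩
      · rintro ⟨a, b, c⟩; exact ⟨a, by omega, c⟩
    · rw [mirror_other r h1 h2]

lemma ent_tauj {lam : List ℕ} {n : ℕ} {σ : Filling lam n} {j : ℕ}
    (hj : j + 1 < lam.length) (hcol : colHt lam j = colHt lam (j + 1)) (u : ℕ × ℕ) :
    ent (tauj j σ) u =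
      if (u.2 = j ∨ u.2 = j + 1) ∧ Swapped σ j u.1 then ent σ (mirror j u) else ent σ u := by
  by_cases h : u ∈ dg lam
  · have hm : mirror j u ∈ dg lam := (mirror_mem hj hcol u).mpr h
    rw [ent, dif_pos h]
    have hrfl : tauj j σ ⟨u, h⟩ =
        if (u.2 = j ∨ u.2 = j + 1) ∧ Swapped σ j u.1 then
          (if h' : mirror j u ∈ dg lam then σ ⟨mirror j u, h'⟩ else σ ⟨u, h⟩)
        else σ ⟨u, h⟩ := rfl
    rw [hrfl]
    by_cases hc : (u.2 = j ∨ u.2 = j + 1) ∧ Swapped σ j u.1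
    · rw [if_pos hc, if_pos hc, dif_pos hm, ent, dif_pos hm]
    · rw [if_neg hc, if_neg hc, ent, dif_pos h]
  · have hm : mirror j u ∉ dg lam := fun hh => h ((mirror_mem hj hcol u).mp hh)
    rw [ent, dif_neg h]
    split_ifs
    · rw [ent, dif_neg hm]
    · rw [ent, dif_neg h]

lemma swapDown_iff {lam : List ℕ} {n : ℕ} (σ : Filling lam n) (j L d : ℕ) :
    SwapDown σ j L d ↔ ∀ e, e < d → SwapChanges σ j (L - e) := by
  induction d with
  | zero => simp [SwapDown]
  | succ d ih =>
    rw [SwapDown, ih]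
    constructor
    · rintro ⟨h1, h2⟩ e he
      rcases Nat.lt_succ_iff_lt_or_eq.mp he with h | rfl
      · exact h1 e h
      · exact h2
    · intro h
      exact ⟨fun e he => h e (he.trans (Nat.lt_succ_self d)), h d (Nat.lt_succ_self d)⟩

lemma swapped_iff {lam : List ℕ} {n : ℕ} (σ : Filling lam n) (j r : ℕ)
    (hne : columnOf σ j ≠ columnOf σ (j + 1)) :
    Swapped σ j r ↔ (1 ≤ r ∧ r ≤ topDiff σ j (j + 1) ∧
      ∀ i, r < i → i ≤ topDiff σ j (j + 1) → SwapChanges σ j i) := by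
  rw [Swapped, swapDown_iff]
  constructor
  · rintro ⟨-, h1, h2, h3⟩
    refine ⟨h1, h2, fun i hi1 hi2 => ?_⟩
    have := h3 (topDiff σ j (j + 1) - i) (by omega)
    rwa [Nat.sub_sub_self hi2] at this
  · rintro ⟨h1, h2, h3⟩
    exact ⟨hne, h1, h2, fun e he => h3 _ (by omega) (by omega)⟩


lemma mem_Ltriples {lam : List ℕ} {p : (ℕ × ℕ) × (ℕ × ℕ)} :
    p ∈ Ltriples lam ↔ p.1 ∈ dg lam ∧ p.2 ∈ dg lam ∧ p.1.1 = p.2.1 ∧ p.1.2 < p.2.2 := by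
  unfold Ltriples
  simp only [Finset.mem_filter, Finset.mem_product]
  tauto

/-- The summand for the change in `quinv`. -/
def Fdiff {lam : List ℕ} {n : ℕ} (σ σ' : Filling lam n) (p : (ℕ × ℕ) × (ℕ × ℕ)) : ℤ :=
  (if QuinvTriple σ' p.1 p.2 then (1:ℤ) else 0) - (if QuinvTriple σ p.1 p.2 then 1 else 0)

lemma quinv_cast {lam : List ℕ} {n : ℕ} (σ : Filling lam n) :
    (quinv σ : ℤ) = ∑ p ∈ Ltriples lam, (if QuinvTriple σ p.1 p.2 then (1:ℤ) else 0) := by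
  rw [quinv, Finset.card_filter]
  push_cast
  rfl

/-- The pairing involution used to compare `quinv` before and after `τ_j`. -/
def invo (j : ℕ) (p : (ℕ × ℕ) × (ℕ × ℕ)) : (ℕ × ℕ) × (ℕ × ℕ) :=
  if p.1.2 = j ∧ p.2.2 = j + 1 then p else (mirror j p.1, mirror j p.2)

lemma invo_pos {j : ℕ} {p : (ℕ × ℕ) × (ℕ × ℕ)} (h : p.1.2 = j ∧ p.2.2 = j + 1) :
    invo j p = p := by rw [invo, if_pos h]

lemma invo_neg {j : ℕ} {p : (ℕ × ℕ) × (ℕ × ℕ)} (h : ¬ (p.1.2 = j ∧ p.2.2 = j + 1)) :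
    invo j p = (mirror j p.1, mirror j p.2) := by rw [invo, if_neg h]

lemma mirror_fix_col {j r i : ℕ} (h : mirror j (r, i) = (r, i)) : i ≠ j ∧ i ≠ j + 1 := by
  constructor <;> rintro rfl
  · rw [mirror_left] at h
    exact absurd (congrArg Prod.snd h) (by simp)
  · rw [mirror_right] at h
    exact absurd (congrArg Prod.snd h) (by simp)

lemma mirror_col_eq_left {j r i : ℕ} (h : (mirror j (r, i)).2 = j) : i = j + 1 := by
  by_cases h1 : i = j
  · subst h1; rw [mirror_left] at h; exact absurd h (by simp)
  · by_cases h2 : i = j + 1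
    · exact h2
    · rw [mirror_other r h1 h2] at h; exact absurd h (by simpa using h1)

lemma mirror_col_eq_right {j r i : ℕ} (h : (mirror j (r, i)).2 = j + 1) : i = j := by
  by_cases h1 : i = j
  · exact h1
  · by_cases h2 : i = j + 1
    · subst h2; rw [mirror_right] at h; exact absurd h (by simp)
    · rw [mirror_other r h1 h2] at h; exact absurd h (by simpa using h2)


section Facts

variable {lam : List ℕ} {n : ℕ} {σ : Filling lam n} {j : ℕ}

lemma topDiff_facts (hcol : colHt lam j = colHt lam (j + 1))
    (hne : columnOf σ j ≠ columnOf σ (j + 1)) :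
    1 ≤ topDiff σ j (j + 1) ∧ topDiff σ j (j + 1) ≤ colHt lam j ∧
      ent σ (topDiff σ j (j + 1), j) ≠ ent σ (topDiff σ j (j + 1), j + 1) := by
  have hLrfl : topDiff σ j (j + 1) =
      sSup {r : ℕ | r ∈ Finset.Icc 1 (colHt lam j) ∧ ent σ (r, j) ≠ ent σ (r, j + 1)} := rfl
  have hSbdd : BddAbove {r : ℕ | r ∈ Finset.Icc 1 (colHt lam j) ∧
      ent σ (r, j) ≠ ent σ (r, j + 1)} :=
    ⟨colHt lam j, fun r hr => (Finset.mem_Icc.mp hr.1).2⟩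
  have hSne : Set.Nonempty {r : ℕ | r ∈ Finset.Icc 1 (colHt lam j) ∧
      ent σ (r, j) ≠ ent σ (r, j + 1)} := by
    by_contra hS
    apply hne
    have hall : ∀ r, 1 ≤ r → r ≤ colHt lam j → ent σ (r, j) = ent σ (r, j + 1) := by
      intro r h1 h2
      by_contra hd
      exact hS ⟨r, Finset.mem_Icc.mpr ⟨h1, h2⟩, hd⟩
    unfold columnOf
    rw [← hcol]
    refine List.map_congr_left fun r hr => ?_
    rw [List.mem_range] at hr
    exact hall (r + 1) (by omega) (by omega)
  have hLS := hLrfl ▸ Nat.sSup_mem hSne hSbdd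
  exact ⟨(Finset.mem_Icc.mp hLS.1).1, (Finset.mem_Icc.mp hLS.1).2, hLS.2⟩

lemma ent_eq_above (hcol : colHt lam j = colHt lam (j + 1))
    (hne : columnOf σ j ≠ columnOf σ (j + 1)) :
    ∀ r, topDiff σ j (j + 1) < r → ent σ (r, j) = ent σ (r, j + 1) := by
  intro r hr
  have hSbdd : BddAbove {r : ℕ | r ∈ Finset.Icc 1 (colHt lam j) ∧
      ent σ (r, j) ≠ ent σ (r, j + 1)} :=
    ⟨colHt lam j, fun r hr => (Finset.mem_Icc.mp hr.1).2⟩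
  have hL1 : 1 ≤ topDiff σ j (j + 1) := (topDiff_facts hcol hne).1
  by_cases h2 : r ≤ colHt lam j
  · by_contra hd
    have hle : r ≤ topDiff σ j (j + 1) :=
      le_csSup hSbdd ⟨Finset.mem_Icc.mpr ⟨by omega, h2⟩, hd⟩
    omega
  · have hd1 : ((r, j) : ℕ × ℕ) ∉ dg lam := by
      rw [mem_dg]; simp only; omega
    have hd2 : ((r, j + 1) : ℕ × ℕ) ∉ dg lam := by
      rw [mem_dg]; simp only; omega
    rw [ent_out hd1, ent_out hd2]

lemma swapped_top (hcol : colHt lam j = colHt lam (j + 1))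
    (hne : columnOf σ j ≠ columnOf σ (j + 1)) :
    Swapped σ j (topDiff σ j (j + 1)) :=
  (swapped_iff σ j _ hne).mpr ⟨(topDiff_facts hcol hne).1, le_refl _,
    fun i h1 h2 => absurd h1 (by omega)⟩

lemma swapped_bounds (hne : columnOf σ j ≠ columnOf σ (j + 1)) {r : ℕ}
    (h : Swapped σ j r) : 1 ≤ r ∧ r ≤ topDiff σ j (j + 1) :=
  ⟨((swapped_iff σ j r hne).mp h).1, ((swapped_iff σ j r hne).mp h).2.1⟩

lemma swapped_F1 (hne : columnOf σ j ≠ columnOf σ (j + 1)) {r : ℕ}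
    (hr : Swapped σ j r) (hr1 : ¬ Swapped σ j (r + 1)) : r = topDiff σ j (j + 1) := by
  by_contra hrne
  obtain ⟨h1, h2, h3⟩ := (swapped_iff σ j r hne).mp hr
  exact hr1 ((swapped_iff σ j (r + 1) hne).mpr
    ⟨by omega, by omega, fun i a b => h3 i (by omega) b⟩)

lemma swapped_F2 (hne : columnOf σ j ≠ columnOf σ (j + 1)) {r : ℕ} (h1 : 1 ≤ r)
    (hr : ¬ Swapped σ j r) (hr1 : Swapped σ j (r + 1)) : ¬ SwapChanges σ j (r + 1) := by
  intro hsc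
  obtain ⟨a, b, c⟩ := (swapped_iff σ j (r + 1) hne).mp hr1
  refine hr ((swapped_iff σ j r hne).mpr ⟨h1, by omega, fun i hi1 hi2 => ?_⟩)
  by_cases h : i = r + 1
  · subst h; exact hsc
  · exact c i (by omega) hi2

lemma swapped_F3 (hne : columnOf σ j ≠ columnOf σ (j + 1)) {r : ℕ}
    (hr : Swapped σ j r) (hr1 : Swapped σ j (r + 1)) : SwapChanges σ j (r + 1) := by
  obtain ⟨a, b, c⟩ := (swapped_iff σ j r hne).mp hr
  exact c (r + 1) (by omega) ((swapped_iff σ j (r + 1) hne).mp hr1).2.1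

lemma swapchanges_iff (σ : Filling lam n) (j r : ℕ) : SwapChanges σ j (r + 1) ↔
    ¬ (QEnt (ent σ (r + 1, j)) (ent σ (r, j)) (ent σ (r, j + 1)) ↔
       QEnt (ent σ (r + 1, j + 1)) (ent σ (r, j)) (ent σ (r, j + 1))) := by
  rw [SwapChanges]
  simp

lemma ent_tauj_left (hj : j + 1 < lam.length) (hcol : colHt lam j = colHt lam (j + 1))
    (r : ℕ) : ent (tauj j σ) (r, j) =
      if Swapped σ j r then ent σ (r, j + 1) else ent σ (r, j) := by
  rw [ent_tauj hj hcol, mirror_left]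
  simp

lemma ent_tauj_right (hj : j + 1 < lam.length) (hcol : colHt lam j = colHt lam (j + 1))
    (r : ℕ) : ent (tauj j σ) (r, j + 1) =
      if Swapped σ j r then ent σ (r, j) else ent σ (r, j + 1) := by
  rw [ent_tauj hj hcol, mirror_right]
  simp [Nat.succ_ne_self]

lemma ent_tauj_other_s4 (hj : j + 1 < lam.length) (hcol : colHt lam j = colHt lam (j + 1))
    (r k : ℕ) (h1 : k ≠ j) (h2 : k ≠ j + 1) : ent (tauj j σ) (r, k) = ent σ (r, k) := by
  rw [ent_tauj hj hcol, if_neg]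
  rintro ⟨h | h, -⟩
  · exact h1 h
  · exact h2 h

lemma Fdiff_out (hj : j + 1 < lam.length) (hcol : colHt lam j = colHt lam (j + 1))
    (r i k : ℕ) (hi1 : i ≠ j) (hi2 : i ≠ j + 1) (hk1 : k ≠ j) (hk2 : k ≠ j + 1) :
    Fdiff σ (tauj j σ) ((r, i), (r, k)) = 0 := by
  have e1 : Fdiff σ (tauj j σ) ((r, i), (r, k)) =
      (if QEnt (ent (tauj j σ) (r + 1, i)) (ent (tauj j σ) (r, i)) (ent (tauj j σ) (r, k))
        then (1:ℤ) else 0) -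
      (if QEnt (ent σ (r + 1, i)) (ent σ (r, i)) (ent σ (r, k)) then 1 else 0) := rfl
  rw [e1, ent_tauj_other_s4 hj hcol (r + 1) i hi1 hi2, ent_tauj_other_s4 hj hcol r i hi1 hi2,
    ent_tauj_other_s4 hj hcol r k hk1 hk2, sub_self]

lemma Fdiff_right (hj : j + 1 < lam.length) (hcol : colHt lam j = colHt lam (j + 1))
    (hne : columnOf σ j ≠ columnOf σ (j + 1)) (r k : ℕ) (h1 : 1 ≤ r) (hk : j + 1 < k) :
    Fdiff σ (tauj j σ) ((r, j), (r, k)) + Fdiff σ (tauj j σ) ((r, j + 1), (r, k)) = 0 := by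
  have hk1 : k ≠ j := by omega
  have hk2 : k ≠ j + 1 := by omega
  have e1 : Fdiff σ (tauj j σ) ((r, j), (r, k)) =
      (if QEnt (ent (tauj j σ) (r + 1, j)) (ent (tauj j σ) (r, j)) (ent (tauj j σ) (r, k))
        then (1:ℤ) else 0) -
      (if QEnt (ent σ (r + 1, j)) (ent σ (r, j)) (ent σ (r, k)) then 1 else 0) := rfl
  have e2 : Fdiff σ (tauj j σ) ((r, j + 1), (r, k)) =
      (if QEnt (ent (tauj j σ) (r + 1, j + 1)) (ent (tauj j σ) (r, j + 1))
          (ent (tauj j σ) (r, k)) then (1:ℤ) else 0) -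
      (if QEnt (ent σ (r + 1, j + 1)) (ent σ (r, j + 1)) (ent σ (r, k)) then 1 else 0) := rfl
  rw [e1, e2, ent_tauj_other_s4 hj hcol r k hk1 hk2, ent_tauj_left hj hcol (r + 1),
    ent_tauj_left hj hcol r, ent_tauj_right hj hcol (r + 1), ent_tauj_right hj hcol r]
  by_cases sr : Swapped σ j r <;> by_cases sr1 : Swapped σ j (r + 1)
  · rw [if_pos sr, if_pos sr, if_pos sr1, if_pos sr1]; ring
  · have hrL : r = topDiff σ j (j + 1) := swapped_F1 hne sr sr1
    have hAA : ent σ (r + 1, j) = ent σ (r + 1, j + 1) :=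
      ent_eq_above hcol hne (r + 1) (by omega)
    rw [if_pos sr, if_pos sr, if_neg sr1, if_neg sr1, hAA]; ring
  · have hnsc := swapped_F2 hne h1 sr sr1
    rw [swapchanges_iff, not_not] at hnsc
    rw [if_neg sr, if_neg sr, if_pos sr1, if_pos sr1]
    exact qent_count hnsc
  · rw [if_neg sr, if_neg sr, if_neg sr1, if_neg sr1]; ring

lemma Fdiff_left (hj : j + 1 < lam.length) (hcol : colHt lam j = colHt lam (j + 1))
    (r k : ℕ) (hk : k < j) :
    Fdiff σ (tauj j σ) ((r, k), (r, j)) + Fdiff σ (tauj j σ) ((r, k), (r, j + 1)) = 0 := by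
  have hk1 : k ≠ j := by omega
  have hk2 : k ≠ j + 1 := by omega
  have e1 : Fdiff σ (tauj j σ) ((r, k), (r, j)) =
      (if QEnt (ent (tauj j σ) (r + 1, k)) (ent (tauj j σ) (r, k)) (ent (tauj j σ) (r, j))
        then (1:ℤ) else 0) -
      (if QEnt (ent σ (r + 1, k)) (ent σ (r, k)) (ent σ (r, j)) then 1 else 0) := rfl
  have e2 : Fdiff σ (tauj j σ) ((r, k), (r, j + 1)) =
      (if QEnt (ent (tauj j σ) (r + 1, k)) (ent (tauj j σ) (r, k))
          (ent (tauj j σ) (r, j + 1)) then (1:ℤ) else 0) -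
      (if QEnt (ent σ (r + 1, k)) (ent σ (r, k)) (ent σ (r, j + 1)) then 1 else 0) := rfl
  rw [e1, e2, ent_tauj_other_s4 hj hcol (r + 1) k hk1 hk2, ent_tauj_other_s4 hj hcol r k hk1 hk2,
    ent_tauj_left hj hcol r, ent_tauj_right hj hcol r]
  by_cases sr : Swapped σ j r
  · rw [if_pos sr, if_pos sr]; ring
  · rw [if_neg sr, if_neg sr]; ring

lemma Fdiff_int (hj : j + 1 < lam.length) (hcol : colHt lam j = colHt lam (j + 1))
    (hne : columnOf σ j ≠ columnOf σ (j + 1)) (r : ℕ) (h1 : 1 ≤ r)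
    (h2 : r ≠ topDiff σ j (j + 1)) :
    Fdiff σ (tauj j σ) ((r, j), (r, j + 1)) = 0 := by
  have e1 : Fdiff σ (tauj j σ) ((r, j), (r, j + 1)) =
      (if QEnt (ent (tauj j σ) (r + 1, j)) (ent (tauj j σ) (r, j))
          (ent (tauj j σ) (r, j + 1)) then (1:ℤ) else 0) -
      (if QEnt (ent σ (r + 1, j)) (ent σ (r, j)) (ent σ (r, j + 1)) then 1 else 0) := rfl
  rw [e1, ent_tauj_left hj hcol (r + 1), ent_tauj_left hj hcol r, ent_tauj_right hj hcol r]
  by_cases sr : Swapped σ j r <;> by_cases sr1 : Swapped σ j (r + 1)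
  · have hsc := swapped_F3 hne sr sr1
    rw [swapchanges_iff] at hsc
    rw [if_pos sr, if_pos sr, if_pos sr1]
    have hab : ent σ (r, j) ≠ ent σ (r, j + 1) := by
      intro h
      exact hsc (by rw [h]; exact iff_of_false (qent_not_self _ _) (qent_not_self _ _))
    refine ite_sub_eq_zero ?_
    rw [qent_swap (Ne.symm hab)]
    exact not_iff_comm.mp (not_iff.mp hsc)
  · exact absurd (swapped_F1 hne sr sr1) h2
  · have hnsc := swapped_F2 hne h1 sr sr1
    rw [swapchanges_iff, not_not] at hnsc
    rw [if_neg sr, if_neg sr, if_pos sr1]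
    exact ite_sub_eq_zero hnsc.symm
  · rw [if_neg sr, if_neg sr, if_neg sr1, sub_self]

lemma Fdiff_star (hj : j + 1 < lam.length) (hcol : colHt lam j = colHt lam (j + 1))
    (hne : columnOf σ j ≠ columnOf σ (j + 1)) :
    Fdiff σ (tauj j σ) ((topDiff σ j (j + 1), j), (topDiff σ j (j + 1), j + 1)) = 1 ∨
    Fdiff σ (tauj j σ) ((topDiff σ j (j + 1), j), (topDiff σ j (j + 1), j + 1)) = -1 := by
  have e1 : Fdiff σ (tauj j σ) ((topDiff σ j (j + 1), j), (topDiff σ j (j + 1), j + 1)) =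
      (if QEnt (ent (tauj j σ) (topDiff σ j (j + 1) + 1, j))
          (ent (tauj j σ) (topDiff σ j (j + 1), j))
          (ent (tauj j σ) (topDiff σ j (j + 1), j + 1)) then (1:ℤ) else 0) -
      (if QEnt (ent σ (topDiff σ j (j + 1) + 1, j)) (ent σ (topDiff σ j (j + 1), j))
          (ent σ (topDiff σ j (j + 1), j + 1)) then 1 else 0) := rfl
  have hsL1 : ¬ Swapped σ j (topDiff σ j (j + 1) + 1) := fun h => by
    have := swapped_bounds hne h; omega
  rw [e1, ent_tauj_left hj hcol _, ent_tauj_left hj hcol _, ent_tauj_right hj hcol _,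
    if_pos (swapped_top hcol hne), if_pos (swapped_top hcol hne), if_neg hsL1]
  exact ite_flip (qent_swap (Ne.symm (topDiff_facts hcol hne).2.2))

end Facts


set_option maxHeartbeats 1000000 in
lemma sum_erase_zero {lam : List ℕ} {n : ℕ} {σ : Filling lam n} {j : ℕ}
    (hj : j + 1 < lam.length) (hcol : colHt lam j = colHt lam (j + 1))
    (hne : columnOf σ j ≠ columnOf σ (j + 1)) :
    ∑ p ∈ (Ltriples lam).erase ((topDiff σ j (j + 1), j), (topDiff σ j (j + 1), j + 1)),
      Fdiff σ (tauj j σ) p = 0 := by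
  refine Finset.sum_involution (fun p _ => invo j p) ?_ ?_ ?_ ?_
  · -- pairs sum to zero
    rintro ⟨⟨r, i⟩, ⟨r', k⟩⟩ hp
    obtain ⟨hpne, hpT⟩ := Finset.mem_erase.mp hp
    obtain ⟨hm1, hm2, hm3, hm4⟩ := mem_Ltriples.mp hpT
    have hrr : r = r' := hm3
    subst hrr
    have hik : i < k := hm4
    have hr1 : 1 ≤ r := (mem_dg.mp hm1).1
    show Fdiff σ (tauj j σ) ((r, i), (r, k)) + Fdiff σ (tauj j σ) (invo j ((r, i), (r, k))) = 0
    by_cases hint : i = j ∧ k = j + 1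
    · have hinv : invo j ((r, i), (r, k)) = ((r, i), (r, k)) := invo_pos hint
      obtain ⟨hi, hk⟩ := hint
      have hrL : r ≠ topDiff σ j (j + 1) := fun h => hpne (by rw [hi, hk, h])
      rw [hinv, hi, hk, Fdiff_int hj hcol hne r hr1 hrL]
      norm_num
    · have hinv : invo j ((r, i), (r, k)) = (mirror j (r, i), mirror j (r, k)) :=
        invo_neg hint
      rw [hinv]
      by_cases hi1 : i = j
      · have hk : j + 1 < k := by omega
        rw [hi1, mirror_left, mirror_other r (by omega) (by omega)]
        exact Fdiff_right hj hcol hne r k hr1 hk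
      · by_cases hi2 : i = j + 1
        · have hk : j + 1 < k := by omega
          rw [hi2, mirror_right, mirror_other r (by omega) (by omega), add_comm]
          exact Fdiff_right hj hcol hne r k hr1 hk
        · by_cases hk1 : k = j
          · rw [hk1, mirror_other r hi1 hi2, mirror_left]
            exact Fdiff_left hj hcol r i (by omega)
          · by_cases hk2 : k = j + 1
            · rw [hk2, mirror_other r hi1 hi2, mirror_right, add_comm]
              exact Fdiff_left hj hcol r i (by omega)
            · rw [mirror_other r hi1 hi2, mirror_other r hk1 hk2,
                Fdiff_out hj hcol r i k hi1 hi2 hk1 hk2]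
              norm_num
  · -- not fixed when nonzero
    rintro ⟨⟨r, i⟩, ⟨r', k⟩⟩ hp hF
    obtain ⟨hpne, hpT⟩ := Finset.mem_erase.mp hp
    obtain ⟨hm1, hm2, hm3, hm4⟩ := mem_Ltriples.mp hpT
    have hrr : r = r' := hm3
    subst hrr
    have hr1 : 1 ≤ r := (mem_dg.mp hm1).1
    show invo j ((r, i), (r, k)) ≠ ((r, i), (r, k))
    by_cases hint : i = j ∧ k = j + 1
    · exfalso
      obtain ⟨hi, hk⟩ := hint
      have hrL : r ≠ topDiff σ j (j + 1) := fun h => hpne (by rw [hi, hk, h])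
      apply hF
      show Fdiff σ (tauj j σ) ((r, i), (r, k)) = 0
      rw [hi, hk]
      exact Fdiff_int hj hcol hne r hr1 hrL
    · have hinv : invo j ((r, i), (r, k)) = (mirror j (r, i), mirror j (r, k)) :=
        invo_neg hint
      rw [hinv]
      intro heq
      have h1 : mirror j (r, i) = (r, i) := congrArg Prod.fst heq
      have h2 : mirror j (r, k) = (r, k) := congrArg Prod.snd heq
      obtain ⟨hi1, hi2⟩ := mirror_fix_col h1
      obtain ⟨hk1, hk2⟩ := mirror_fix_col h2
      apply hF
      show Fdiff σ (tauj j σ) ((r, i), (r, k)) = 0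
      exact Fdiff_out hj hcol r i k hi1 hi2 hk1 hk2
  · -- maps into the set
    rintro ⟨⟨r, i⟩, ⟨r', k⟩⟩ hp
    obtain ⟨hpne, hpT⟩ := Finset.mem_erase.mp hp
    obtain ⟨hm1, hm2, hm3, hm4⟩ := mem_Ltriples.mp hpT
    have hrr : r = r' := hm3
    subst hrr
    have hik : i < k := hm4
    have hr1 : 1 ≤ r := (mem_dg.mp hm1).1
    have hrci : r ≤ colHt lam i := (mem_dg.mp hm1).2.2
    have hilen : i < lam.length := (mem_dg.mp hm1).2.1
    have hrck : r ≤ colHt lam k := (mem_dg.mp hm2).2.2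
    have hklen : k < lam.length := (mem_dg.mp hm2).2.1
    show invo j ((r, i), (r, k)) ∈
      (Ltriples lam).erase ((topDiff σ j (j + 1), j), (topDiff σ j (j + 1), j + 1))
    by_cases hint : i = j ∧ k = j + 1
    · have hinv : invo j ((r, i), (r, k)) = ((r, i), (r, k)) := invo_pos hint
      rw [hinv]; exact hp
    · have hinv : invo j ((r, i), (r, k)) = (mirror j (r, i), mirror j (r, k)) :=
        invo_neg hint
      rw [hinv, Finset.mem_erase]
      by_cases hi1 : i = j
      · have hk : j + 1 < k := by omega
        rw [hi1] at hrci hilen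
        rw [hi1, mirror_left, mirror_other r (by omega) (by omega)]
        constructor
        · simp only [ne_eq, Prod.mk.injEq]; omega
        · rw [mem_Ltriples]
          refine ⟨?_, hm2, rfl, ?_⟩
          · rw [mem_dg]
            refine ⟨hr1, ?_, ?_⟩
            · show j + 1 < lam.length
              omega
            · show r ≤ colHt lam (j + 1)
              omega
          · show j + 1 < k
            omega
      · by_cases hi2 : i = j + 1
        · have hk : j + 1 < k := by omega
          rw [hi2] at hrci hilen
          rw [hi2, mirror_right, mirror_other r (by omega) (by omega)]
          constructor
          · simp only [ne_eq, Prod.mk.injEq]; omega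
          · rw [mem_Ltriples]
            refine ⟨?_, hm2, rfl, ?_⟩
            · rw [mem_dg]
              refine ⟨hr1, ?_, ?_⟩
              · show j < lam.length
                omega
              · show r ≤ colHt lam j
                omega
            · show j < k
              omega
        · by_cases hk1 : k = j
          · rw [hk1] at hrck hklen
            rw [hk1, mirror_other r hi1 hi2, mirror_left]
            constructor
            · simp only [ne_eq, Prod.mk.injEq]; omega
            · rw [mem_Ltriples]
              refine ⟨hm1, ?_, rfl, ?_⟩
              · rw [mem_dg]
                refine ⟨hr1, ?_, ?_⟩
                · show j + 1 < lam.length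
                  omega
                · show r ≤ colHt lam (j + 1)
                  omega
              · show i < j + 1
                omega
          · by_cases hk2 : k = j + 1
            · rw [hk2] at hrck hklen
              rw [hk2, mirror_other r hi1 hi2, mirror_right]
              constructor
              · simp only [ne_eq, Prod.mk.injEq]; omega
              · rw [mem_Ltriples]
                refine ⟨hm1, ?_, rfl, ?_⟩
                · rw [mem_dg]
                  refine ⟨hr1, ?_, ?_⟩
                  · show j < lam.length
                    omega
                  · show r ≤ colHt lam j
                    omega
                · show i < j
                  omega
            · rw [mirror_other r hi1 hi2, mirror_other r hk1 hk2]
              exact Finset.mem_erase.mp hp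
  · -- involutive
    rintro ⟨⟨r, i⟩, ⟨r', k⟩⟩ hp
    obtain ⟨hpne, hpT⟩ := Finset.mem_erase.mp hp
    obtain ⟨hm1, hm2, hm3, hm4⟩ := mem_Ltriples.mp hpT
    have hrr : r = r' := hm3
    subst hrr
    have hik : i < k := hm4
    show invo j (invo j ((r, i), (r, k))) = ((r, i), (r, k))
    by_cases hint : i = j ∧ k = j + 1
    · have hinv : invo j ((r, i), (r, k)) = ((r, i), (r, k)) := invo_pos hint
      rw [hinv, hinv]
    · have hinv : invo j ((r, i), (r, k)) = (mirror j (r, i), mirror j (r, k)) :=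
        invo_neg hint
      rw [hinv]
      have hcond : ¬ (((mirror j (r, i), mirror j (r, k)) :
          (ℕ × ℕ) × (ℕ × ℕ)).1.2 = j ∧
          ((mirror j (r, i), mirror j (r, k)) : (ℕ × ℕ) × (ℕ × ℕ)).2.2 = j + 1) := by
        rintro ⟨hc1, hc2⟩
        have hi : i = j + 1 := mirror_col_eq_left hc1
        have hk : k = j := mirror_col_eq_right hc2
        omega
      have hinv2 : invo j ((mirror j (r, i), mirror j (r, k)) : (ℕ × ℕ) × (ℕ × ℕ)) =
          (mirror j (mirror j (r, i)), mirror j (mirror j (r, k))) := invo_neg hcond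
      rw [hinv2, mirror_mirror, mirror_mirror]

/-- for `λ_j = λ_{j+1}` and `σ` whose columns `j` and `j+1` are not identical,
`τ_j` changes `quinv` by exactly `1` (up or down). -/
theorem tauj_changes_quinv_by_one
    (lam : List ℕ) (hdec : lam.Pairwise (· ≥ ·)) (hpos : ∀ m ∈ lam, 0 < m)
    (n : ℕ) (hn : 1 ≤ n) (j : ℕ) (hj : j + 1 < lam.length)
    (hcol : colHt lam j = colHt lam (j + 1)) (σ : Filling lam n)
    (hne : columnOf σ j ≠ columnOf σ (j + 1)) :
    quinv (tauj j σ) = quinv σ + 1 ∨ quinv σ = quinv (tauj j σ) + 1 := by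
  classical
  have hjlen : j < lam.length := by omega
  have hL1 : 1 ≤ topDiff σ j (j + 1) := (topDiff_facts hcol hne).1
  have hLm : topDiff σ j (j + 1) ≤ colHt lam j := (topDiff_facts hcol hne).2.1
  have hstar0 : (((topDiff σ j (j + 1), j), (topDiff σ j (j + 1), j + 1)) :
      (ℕ × ℕ) × (ℕ × ℕ)) ∈ Ltriples lam := by
    rw [mem_Ltriples]
    refine ⟨?_, ?_, rfl, ?_⟩
    · rw [mem_dg]
      refine ⟨hL1, ?_, hLm⟩
      show j < lam.length
      omega
    · rw [mem_dg]
      refine ⟨hL1, ?_, ?_⟩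
      · show j + 1 < lam.length
        omega
      · show topDiff σ j (j + 1) ≤ colHt lam (j + 1)
        omega
    · show j < j + 1
      omega
  have hq : (quinv (tauj j σ) : ℤ) - (quinv σ : ℤ) =
      ∑ p ∈ Ltriples lam, Fdiff σ (tauj j σ) p := by
    rw [quinv_cast, quinv_cast, ← Finset.sum_sub_distrib]
    rfl
  rw [← Finset.add_sum_erase _ _ hstar0, sum_erase_zero hj hcol hne, add_zero] at hq
  rcases Fdiff_star hj hcol hne (σ := σ) with h | h
  · left; omega
  · right; omega


end MacQuinv
end
end
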